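/- Let R be a commutative ring, I an ideal, and x_1, ..., x_{i+1} elements of I. Fix n ≥ 2 and assume: (x_1,...,x_{i+1}) ∩ I^n = (x_1,...,x_{i+1})·I^{n-1}, ((x_1,...,x_i) : x_{i+1}) ∩ I^{n-1} = (x_1,...,x_i) ∩ I^{n-1}, and (x_1,...,x_i) ∩ I^{n-1} = (x_1,...,x_i)·I^{n-2}. Then (x_1,...,x_i) ∩ I^n = (x_1,...,x_i)·I^{n-1}. -/

import Mathlib

theorem stmt_12 {R : Type*} [CommRing R] (I : Ideal R) (i : ℕ)
    (x : Fin (i + 1) → R) (hx : ∀ j, x j ∈ I)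
    (A : Ideal R) (hA : A = Ideal.span (Set.range fun j : Fin i => x j.castSucc))
    (B : Ideal R) (hB : B = A ⊔ Ideal.span {x (Fin.last i)})
    (n : ℕ) (hn : 2 ≤ n)
    (h1 : B ⊓ I ^ n = B * I ^ (n - 1))
    (h2 : A.colon (Ideal.span {x (Fin.last i)}) ⊓ I ^ (n - 1) = A ⊓ I ^ (n - 1))
    (h3 : A ⊓ I ^ (n - 1) = A * I ^ (n - 2)) :
    A ⊓ I ^ n = A * I ^ (n - 1) := by
  have hAI : A ≤ I := by
    rw [hA, Ideal.span_le]
    rintro _ ⟨j, rfl⟩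
    exact hx _
  have hpow : I * I ^ (n - 1) = I ^ n := by
    rw [← pow_succ']
    congr 1
    omega
  have hpow2 : I * I ^ (n - 2) = I ^ (n - 1) := by
    rw [← pow_succ']
    congr 1
    omega
  apply le_antisymm
  · intro a ha
    obtain ⟨haA, haI⟩ := ha
    have haB : a ∈ B * I ^ (n - 1) := by
      rw [← h1]
      exact ⟨hB ▸ (le_sup_left : A ≤ A ⊔ _) haA, haI⟩
    rw [hB, Ideal.sup_mul] at haB
    obtain ⟨p, hp, q, hq, hpq⟩ := Submodule.mem_sup.mp haB
    rw [Ideal.mem_span_singleton_mul] at hq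
    obtain ⟨z, hz, hzq⟩ := hq
    have hpA : p ∈ A := Ideal.mul_le_left hp
    have hxzA : x (Fin.last i) * z ∈ A := by
      have : x (Fin.last i) * z = a - p := by rw [hzq]; linear_combination hpq
      rw [this]
      exact A.sub_mem haA hpA
    have hzc : z ∈ A.colon (Ideal.span {x (Fin.last i)}) := by
      rw [Ideal.mem_colon_span_singleton, mul_comm]
      exact hxzA
    have hz2 : z ∈ A * I ^ (n - 2) := by
      rw [← h3, ← h2]; exact ⟨hzc, hz⟩
    have hq2 : q ∈ A * I ^ (n - 1) := by
      rw [← hzq]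
      have : x (Fin.last i) * z ∈ I * (A * I ^ (n - 2)) :=
        Ideal.mul_mem_mul (hx _) hz2
      rwa [show I * (A * I ^ (n - 2)) = A * (I * I ^ (n - 2)) by ring, hpow2] at this
    rw [← hpq]
    exact Submodule.add_mem _ hp hq2
  · apply le_inf Ideal.mul_le_left
    calc A * I ^ (n - 1) ≤ I * I ^ (n - 1) := Ideal.mul_mono_left hAI
      _ = I ^ n := hpow
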